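/- Let A be an associative unital ring, ι a finite set, T a map from subsets of ι to A with T(∅) = 1, and for each l ∈ ι let T'_l be a map from subsets of ι to A with T'_l(X) = 0 whenever l ∉ X or X = ∅; let T̄ and T̄'_l be the associated barred families. Then for every nonempty Z ⊆ ι and every l ∈ ι one has Σ_{X ⊔ Y = Z} (−1)^{|X|} [T'_l(X)·T̄(Y) + T(X)·T̄'_l(Y)] = 0 and Σ_{X ⊔ Y = Z} (−1)^{|X|} [T̄'_l(X)·T(Y) + T̄(X)·T'_l(Y)] = 0. -/

import Mathlib

/-- Sum over all ordered partitions of `X` into `r ≥ 1` nonempty pairwise disjoint blocks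
`X₁, …, X_r` of `(-1)^r * T X₁ * ⋯ * T X_r` (with value `1` for `X = ∅`), computed by peeling
off the first block. -/
def opSum {A : Type*} [Ring A] {ι : Type*} [DecidableEq ι]
    (T : Finset ι → A) (X : Finset ι) : A :=
  if _hX : X = ∅ then 1
  else
    ∑ Y ∈ (X.powerset.filter (fun Y => Y ≠ ∅)).attach,
      (-1 : A) * T Y.1 * opSum T (X \ Y.1)
termination_by X.card
decreasing_by
  have hY := Y.2
  simp only [Finset.mem_filter, Finset.mem_powerset] at hY
  have h1 : Y.1.card ≤ X.card := Finset.card_le_card hY.1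
  have h2 : 0 < Y.1.card := Finset.card_pos.mpr (Finset.nonempty_iff_ne_empty.mpr hY.2)
  rw [Finset.card_sdiff, Finset.inter_eq_left.mpr hY.1]
  omega

/-- The antichronological products `T̄`, defined by `T̄(∅) = 1` and
`(−1)^{|X|} T̄(X) = Σ_{r=1}^{|X|} (−1)^r Σ T(X₁)⋯T(X_r)`, the inner sum running over all ordered
partitions of `X` into `r` nonempty pairwise disjoint subsets. -/
def chronoBar {A : Type*} [Ring A] {ι : Type*} [DecidableEq ι]
    (T : Finset ι → A) (X : Finset ι) : A :=
  (-1 : A) ^ X.card * opSum T X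

/-- Sum over all ordered partitions of `X` into `r ≥ 1` nonempty pairwise disjoint blocks of
`(-1)^r * T X₁ ⋯ T' X_k ⋯ T X_r`, with `T'` replacing `T` in exactly one block (value `0` for
`X = ∅`), computed by peeling off the first block. -/
def opSumD {A : Type*} [Ring A] {ι : Type*} [DecidableEq ι]
    (T T' : Finset ι → A) (X : Finset ι) : A :=
  if _hX : X = ∅ then 0
  else
    ∑ Y ∈ (X.powerset.filter (fun Y => Y ≠ ∅)).attach,
      (-1 : A) * (T' Y.1 * opSum T (X \ Y.1) + T Y.1 * opSumD T T' (X \ Y.1))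
termination_by X.card
decreasing_by
  have hY := Y.2
  simp only [Finset.mem_filter, Finset.mem_powerset] at hY
  have h1 : Y.1.card ≤ X.card := Finset.card_le_card hY.1
  have h2 : 0 < Y.1.card := Finset.card_pos.mpr (Finset.nonempty_iff_ne_empty.mpr hY.2)
  rw [Finset.card_sdiff, Finset.inter_eq_left.mpr hY.1]
  omega

/-- The barred family `T̄'`, defined by `T̄'(∅) = 0` and
`(−1)^{|X|} T̄'(X) = Σ_{r=1}^{|X|} (−1)^r Σ Σ_{k=1}^{r} T(X₁)⋯T'(X_k)⋯T(X_r)`, the inner sum over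
ordered partitions of `X` into `r` nonempty pairwise disjoint blocks, with `T'` replacing `T`
in exactly one block. -/
def chronoBarD {A : Type*} [Ring A] {ι : Type*} [DecidableEq ι]
    (T T' : Finset ι → A) (X : Finset ι) : A :=
  (-1 : A) ^ X.card * opSumD T T' X

namespace ChronoAux

variable {A : Type*} [Ring A] {ι : Type*} [DecidableEq ι]

/-- Untwisted convolution on functions `Finset ι → A`. -/
def conv (a b : Finset ι → A) : Finset ι → A :=
  fun Z => ∑ X ∈ Z.powerset, a X * b (Z \ X)

/-- The unit for `conv`. -/
def delta : Finset ι → A := fun Z => if Z = ∅ then 1 else 0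

lemma conv_delta (a : Finset ι → A) : conv a delta = a := by
  funext Z
  rw [conv, Finset.sum_eq_single Z]
  · simp [delta]
  · intro X hX hne
    have hsub : X ⊆ Z := Finset.mem_powerset.mp hX
    have h0 : Z \ X ≠ ∅ := fun h =>
      hne (Finset.Subset.antisymm hsub (Finset.sdiff_eq_empty_iff_subset.mp h))
    simp [delta, h0]
  · intro h; exact absurd (Finset.mem_powerset_self Z) h

lemma delta_conv (a : Finset ι → A) : conv delta a = a := by
  funext Z
  rw [conv, Finset.sum_eq_single ∅]
  · simp [delta]
  · intro X _ hne; simp [delta, hne]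
  · intro h; exact absurd (Finset.empty_mem_powerset Z) h

lemma conv_add_left (a b c : Finset ι → A) :
    conv (fun X => a X + b X) c = fun Z => conv a c Z + conv b c Z := by
  funext Z
  simp [conv, add_mul, Finset.sum_add_distrib]

lemma conv_neg_right (a b : Finset ι → A) :
    conv a (fun X => - b X) = fun Z => - conv a b Z := by
  funext Z
  simp [conv, mul_neg, Finset.sum_neg_distrib]

lemma sum_powerset_powerset (Z : Finset ι) (f : Finset ι → Finset ι → A) :
    ∑ Y ∈ Z.powerset, ∑ X ∈ Y.powerset, f X Y
      = ∑ X ∈ Z.powerset, ∑ W ∈ (Z \ X).powerset, f X (X ∪ W) := by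
  rw [Finset.sum_sigma', Finset.sum_sigma']
  refine Finset.sum_nbij' (fun p => ⟨p.2, p.1 \ p.2⟩) (fun p => ⟨p.1 ∪ p.2, p.1⟩)
    ?_ ?_ ?_ ?_ ?_
  · rintro ⟨Y, X⟩ hp
    simp only [Finset.mem_sigma, Finset.mem_powerset] at hp ⊢
    exact ⟨hp.2.trans hp.1, Finset.sdiff_subset_sdiff hp.1 le_rfl⟩
  · rintro ⟨X, W⟩ hp
    simp only [Finset.mem_sigma, Finset.mem_powerset] at hp ⊢
    constructor
    · exact Finset.union_subset hp.1 (hp.2.trans Finset.sdiff_subset)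
    · exact Finset.subset_union_left
  · rintro ⟨Y, X⟩ hp
    simp only [Finset.mem_sigma, Finset.mem_powerset] at hp
    simp [Finset.union_sdiff_of_subset hp.2]
  · rintro ⟨X, W⟩ hp
    simp only [Finset.mem_sigma, Finset.mem_powerset] at hp
    have hd : Disjoint X W := Finset.disjoint_sdiff.mono_right hp.2
    simp [Finset.union_sdiff_cancel_left hd]
  · rintro ⟨Y, X⟩ hp
    simp only [Finset.mem_sigma, Finset.mem_powerset] at hp
    simp [Finset.union_sdiff_of_subset hp.2]

lemma conv_assoc (a b c : Finset ι → A) :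
    conv (conv a b) c = conv a (conv b c) := by
  funext Z
  simp only [conv, Finset.sum_mul, Finset.mul_sum]
  rw [sum_powerset_powerset Z (fun X Y => a X * b (Y \ X) * c (Z \ Y))]
  refine Finset.sum_congr rfl fun X hX => Finset.sum_congr rfl fun W hW => ?_
  have hW' : W ⊆ Z \ X := Finset.mem_powerset.mp hW
  have hd : Disjoint X W := Finset.disjoint_sdiff.mono_right hW'
  rw [Finset.union_sdiff_cancel_left hd, mul_assoc, sdiff_sdiff]
  rfl

lemma opSum_empty (T : Finset ι → A) : opSum T ∅ = 1 := by
  rw [opSum]; simp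

lemma opSumD_empty (T T' : Finset ι → A) : opSumD T T' ∅ = 0 := by
  rw [opSumD]; simp

lemma opSum_ne (T : Finset ι → A) (X : Finset ι) (hX : X ≠ ∅) :
    ∑ Y ∈ X.powerset.filter (fun Y => Y ≠ ∅), T Y * opSum T (X \ Y) = - opSum T X := by
  rw [opSum, dif_neg hX,
    Finset.sum_attach (X.powerset.filter (fun Y => Y ≠ ∅))
      (fun Y => (-1 : A) * T Y * opSum T (X \ Y))]
  simp [neg_mul]

lemma opSumD_ne (T T' : Finset ι → A) (X : Finset ι) (hX : X ≠ ∅) :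
    ∑ Y ∈ X.powerset.filter (fun Y => Y ≠ ∅),
      (T' Y * opSum T (X \ Y) + T Y * opSumD T T' (X \ Y)) = - opSumD T T' X := by
  rw [opSumD, dif_neg hX,
    Finset.sum_attach (X.powerset.filter (fun Y => Y ≠ ∅))
      (fun Y => (-1 : A) * (T' Y * opSum T (X \ Y) + T Y * opSumD T T' (X \ Y)))]
  simp only [neg_one_mul, Finset.sum_neg_distrib, neg_neg]

lemma filter_empty_powerset (Z : Finset ι) :
    Z.powerset.filter (fun Y => Y = ∅) = {∅} := by
  ext Y
  simp only [Finset.mem_filter, Finset.mem_powerset, Finset.mem_singleton]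
  constructor
  · exact fun h => h.2
  · rintro rfl; exact ⟨Finset.empty_subset Z, rfl⟩

lemma conv_T_opSum (T : Finset ι → A) (hT1 : T ∅ = 1) :
    conv T (opSum T) = delta := by
  funext Z
  by_cases hZ : Z = ∅
  · subst hZ; simp [conv, delta, hT1, opSum_empty]
  · rw [conv, delta, if_neg hZ,
      ← Finset.sum_filter_add_sum_filter_not Z.powerset (fun Y => Y = ∅),
      filter_empty_powerset]
    have hfilter : Z.powerset.filter (fun Y => ¬Y = ∅) = Z.powerset.filter (fun Y => Y ≠ ∅) := rfl
    rw [hfilter, opSum_ne T Z hZ]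
    simp [hT1]

lemma conv_deriv (T T' : Finset ι → A) (hT1 : T ∅ = 1) (hT'0 : T' ∅ = 0) :
    conv T' (opSum T) = fun Z => - conv T (opSumD T T') Z := by
  funext Z
  rw [eq_comm, neg_eq_iff_add_eq_zero, add_comm]
  by_cases hZ : Z = ∅
  · subst hZ; simp [conv, hT'0, opSumD_empty, mul_comm]
  · rw [conv, conv, ← Finset.sum_add_distrib,
      ← Finset.sum_filter_add_sum_filter_not Z.powerset (fun Y => Y = ∅),
      filter_empty_powerset]
    have hfilter : Z.powerset.filter (fun Y => ¬Y = ∅) = Z.powerset.filter (fun Y => Y ≠ ∅) := rfl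
    rw [hfilter, opSumD_ne T T' Z hZ]
    simp [hT1, hT'0]

/-- A left inverse for `T` under convolution, defined recursively. -/
def leftInv (T : Finset ι → A) (Z : Finset ι) : A :=
  if _hZ : Z = ∅ then 1
  else - ∑ X ∈ (Z.powerset.erase Z).attach, leftInv T X.1 * T (Z \ X.1)
termination_by Z.card
decreasing_by
  have hX := X.2
  simp only [Finset.mem_erase, Finset.mem_powerset] at hX
  exact Finset.card_lt_card (Finset.ssubset_iff_subset_ne.mpr ⟨hX.2, hX.1⟩)

lemma conv_leftInv (T : Finset ι → A) (hT1 : T ∅ = 1) :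
    conv (leftInv T) T = delta := by
  funext Z
  by_cases hZ : Z = ∅
  · subst hZ
    have hL0 : leftInv T (∅ : Finset ι) = 1 := by rw [leftInv]; simp
    simp [conv, delta, hT1, hL0]
  · rw [conv, delta, if_neg hZ,
      ← Finset.add_sum_erase Z.powerset _ (Finset.mem_powerset_self Z)]
    have hL : leftInv T Z = - ∑ X ∈ Z.powerset.erase Z, leftInv T X * T (Z \ X) := by
      rw [leftInv, dif_neg hZ,
        Finset.sum_attach (Z.powerset.erase Z) (fun X => leftInv T X * T (Z \ X))]
    rw [Finset.sdiff_self, hT1, mul_one, hL, neg_add_cancel]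

lemma leftInv_eq_opSum (T : Finset ι → A) (hT1 : T ∅ = 1) :
    leftInv T = opSum T := by
  calc leftInv T = conv (leftInv T) delta := (conv_delta _).symm
    _ = conv (leftInv T) (conv T (opSum T)) := by rw [conv_T_opSum T hT1]
    _ = conv (conv (leftInv T) T) (opSum T) := (conv_assoc _ _ _).symm
    _ = conv delta (opSum T) := by rw [conv_leftInv T hT1]
    _ = opSum T := delta_conv _

lemma conv_opSum_T (T : Finset ι → A) (hT1 : T ∅ = 1) :
    conv (opSum T) T = delta := by
  rw [← leftInv_eq_opSum T hT1]; exact conv_leftInv T hT1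

lemma conv_deriv' (T T' : Finset ι → A) (hT1 : T ∅ = 1) (hT'0 : T' ∅ = 0) :
    (fun Z => conv (opSumD T T') T Z + conv (opSum T) T' Z) = fun _ => (0 : A) := by
  set S := opSum T with hS
  set D := opSumD T T' with hD
  set E : Finset ι → A := fun Z => conv D T Z + conv S T' Z with hE
  have hTS : conv T S = delta := conv_T_opSum T hT1
  have hST : conv S T = delta := conv_opSum_T T hT1
  have hT'S : conv T' S = fun Z => - conv T D Z := conv_deriv T T' hT1 hT'0
  have hES : conv E S = fun _ => (0 : A) := by
    rw [hE, conv_add_left, conv_assoc, hTS, conv_delta, conv_assoc, hT'S,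
      conv_neg_right, ← conv_assoc, hST, delta_conv]
    funext Y
    simp
  calc E = conv E delta := (conv_delta E).symm
    _ = conv E (conv S T) := by rw [hST]
    _ = conv (conv E S) T := (conv_assoc _ _ _).symm
    _ = conv (fun _ => (0 : A)) T := by rw [hES]
    _ = fun _ => (0 : A) := by funext Z; simp [conv]

lemma neg_one_pow_comm (n : ℕ) (x : A) : x * (-1 : A) ^ n = (-1 : A) ^ n * x := by
  rcases Nat.even_or_odd n with h | h
  · rw [h.neg_one_pow, mul_one, one_mul]
  · rw [h.neg_one_pow, mul_neg_one, neg_one_mul]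

lemma mul_neg_one_pow_mul (n : ℕ) (x s : A) :
    x * ((-1 : A) ^ n * s) = (-1 : A) ^ n * (x * s) := by
  rw [← mul_assoc, neg_one_pow_comm, mul_assoc]

end ChronoAux

/-- For every nonempty `Z ⊆ ι` and every `l`:
`Σ_{X ⊔ Y = Z} (−1)^{|X|} [T'_l(X)·T̄(Y) + T(X)·T̄'_l(Y)] = 0` and
`Σ_{X ⊔ Y = Z} (−1)^{|X|} [T̄'_l(X)·T(Y) + T̄(X)·T'_l(Y)] = 0`. -/
theorem chrono_antichrono_identities_derived {A : Type*} [Ring A]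
    {ι : Type*} [Fintype ι] [DecidableEq ι]
    (T : Finset ι → A) (hT1 : T ∅ = 1)
    (T' : ι → Finset ι → A) (hT'0 : ∀ l, ∀ X : Finset ι, l ∉ X → T' l X = 0)
    (Z : Finset ι) (hZ : Z ≠ ∅) (l : ι) :
    (∑ X ∈ Z.powerset,
      (-1 : A) ^ X.card *
        (T' l X * chronoBar T (Z \ X) + T X * chronoBarD T (T' l) (Z \ X)) = 0) ∧
    (∑ X ∈ Z.powerset,
      (-1 : A) ^ X.card *
        (chronoBarD T (T' l) X * T (Z \ X) + chronoBar T X * T' l (Z \ X)) = 0) := by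
  classical
  open ChronoAux in
  have hT'e : T' l ∅ = 0 := hT'0 l ∅ (Finset.notMem_empty l)
  set S := opSum T with hS
  set D := opSumD T (T' l) with hD
  have h1 : conv (T' l) S = fun Y => - conv T D Y := conv_deriv T (T' l) hT1 hT'e
  have h2 : (fun Y => conv D T Y + conv S (T' l) Y) = fun _ => (0 : A) :=
    conv_deriv' T (T' l) hT1 hT'e
  constructor
  · have step : ∀ X ∈ Z.powerset,
        (-1 : A) ^ X.card *
          (T' l X * chronoBar T (Z \ X) + T X * chronoBarD T (T' l) (Z \ X))
        = (-1 : A) ^ Z.card * (T' l X * S (Z \ X) + T X * D (Z \ X)) := by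
      intro X hX
      have hsub : X ⊆ Z := Finset.mem_powerset.mp hX
      have hcard : X.card + (Z \ X).card = Z.card := by
        have := Finset.card_le_card hsub
        rw [Finset.card_sdiff, Finset.inter_eq_left.mpr hsub]
        omega
      rw [chronoBar, chronoBarD, mul_neg_one_pow_mul, mul_neg_one_pow_mul, ← mul_add,
        ← mul_assoc, ← pow_add, hcard]
    rw [Finset.sum_congr rfl step, ← Finset.mul_sum]
    have : ∑ X ∈ Z.powerset, (T' l X * S (Z \ X) + T X * D (Z \ X))
        = conv (T' l) S Z + conv T D Z := by
      rw [conv, conv, Finset.sum_add_distrib]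
    rw [this, congrFun h1 Z]
    simp
  · have step : ∀ X ∈ Z.powerset,
        (-1 : A) ^ X.card *
          (chronoBarD T (T' l) X * T (Z \ X) + chronoBar T X * T' l (Z \ X))
        = D X * T (Z \ X) + S X * T' l (Z \ X) := by
      intro X _
      rw [chronoBar, chronoBarD, mul_assoc, mul_assoc, ← mul_add, ← mul_assoc, ← pow_add,
        Even.neg_one_pow ⟨X.card, rfl⟩, one_mul]
    rw [Finset.sum_congr rfl step]
    have : ∑ X ∈ Z.powerset, (D X * T (Z \ X) + S X * T' l (Z \ X))
        = conv D T Z + conv S (T' l) Z := by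
      rw [conv, conv, Finset.sum_add_distrib]
    rw [this, congrFun h2 Z]
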